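/- Assume d is odd and let A be a circular convolution operator on ℓ²(ℤ_d×ℤ_d) with kernel a possessing octagonal symmetry in frequency response. Suppose i_1, i_2, j_1, j_2 ∈ ℤ_d satisfy gcd(|i_1−i_2|, d) = 1 and gcd(j_2, d) = 1, let Ω = {i_1,i_2} × {j_1, j_1+j_2, j_1+2j_2, j_1+3j_2}, and let l_{(i,j)} = (d+1)(d+3)/8 − 1 for each (i,j) ∈ Ω. Then Y = {e_{(i,j)}, A e_{(i,j)}, …, A^{(d+1)(d+3)/8 − 1} e_{(i,j)} : (i,j) ∈ Ω} is a frame for ℓ²(ℤ_d×ℤ_d). Alternatively, if i_1, i_2, j_1, j_2 ∈ ℤ_d satisfy gcd(|j_1−j_2|, d) = 1 and gcd(i_2, d) = 1, and Ω = {i_1, i_1+i_2, i_1+2i_2, i_1+3i_2} × {j_1,j_2} with the same l_{(i,j)}, then Y is a frame for ℓ²(ℤ_d×ℤ_d). -/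

import Mathlib

open Matrix

/-- Unnormalized 2D discrete Fourier transform of `a : ℤ_d × ℤ_d → ℂ`. -/
noncomputable def hatKer2 (d : ℕ) [NeZero d] (a : ZMod d × ZMod d → ℂ) :
    ZMod d × ZMod d → ℂ :=
  fun j => ∑ k : ZMod d × ZMod d,
    a k * Complex.exp (-(2 * (Real.pi : ℂ) * Complex.I) *
      ((j.1.val : ℂ) * (k.1.val : ℂ) + (j.2.val : ℂ) * (k.2.val : ℂ)) / (d : ℂ))

/-- The 2D circular convolution operator with kernel `a`, as a matrix. -/
def convMat2 (d : ℕ) (a : ZMod d × ZMod d → ℂ) :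
    Matrix (ZMod d × ZMod d) (ZMod d × ZMod d) ℂ :=
  Matrix.of fun k i => a (k - i)

/-- The Kronecker product `F_d ⊗ F_d`: its entry at `((i₁,i₂),(j₁,j₂))` is
`(1/d) ω_d^{i₁j₁ + i₂j₂}`. -/
noncomputable def F2Mat (d : ℕ) : Matrix (ZMod d × ZMod d) (ZMod d × ZMod d) ℂ :=
  Matrix.of fun i j => ((d : ℂ))⁻¹ * Complex.exp (-(2 * (Real.pi : ℂ) * Complex.I) *
    ((i.1.val : ℂ) * (j.1.val : ℂ) + (i.2.val : ℂ) * (j.2.val : ℂ)) / (d : ℂ))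


open Complex Finset Polynomial

set_option linter.unusedSectionVars false

noncomputable def zet (d : ℕ) [NeZero d] (t : ZMod d) : ℂ :=
  Complex.exp (2 * (Real.pi : ℂ) * Complex.I * (t.val : ℂ) / d)

def dt {d : ℕ} (m k : ZMod d × ZMod d) : ZMod d := m.1 * k.1 + m.2 * k.2

noncomputable def chi (d : ℕ) [NeZero d] (m : ZMod d × ZMod d) : ZMod d × ZMod d → ℂ :=
  fun k => zet d (dt m k)

section helpers
variable {d : ℕ} [NeZero d]

lemma dC_ne_zero : (d : ℂ) ≠ 0 := Nat.cast_ne_zero.mpr (NeZero.ne d)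

lemma exp_nat_md (n : ℕ) :
    Complex.exp (2 * (Real.pi : ℂ) * Complex.I * ((n % d : ℕ) : ℂ) / d)
      = Complex.exp (2 * (Real.pi : ℂ) * Complex.I * (n : ℂ) / d) := by
  conv_rhs => rw [show n = d * (n / d) + n % d from (Nat.div_add_mod n d).symm]
  push_cast
  rw [show 2 * (Real.pi : ℂ) * Complex.I * ((d : ℂ) * (↑(n / d)) + ↑(n % d)) / d
      = ((n / d : ℕ) : ℂ) * (2 * (Real.pi : ℂ) * Complex.I)
        + 2 * (Real.pi : ℂ) * Complex.I * ((n % d : ℕ) : ℂ) / d by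
    have hd : (d:ℂ) ≠ 0 := dC_ne_zero
    field_simp]
  rw [Complex.exp_add, Complex.exp_nat_mul, Complex.exp_two_pi_mul_I, one_pow, one_mul]

lemma zet_natCast (n : ℕ) :
    zet d (n : ZMod d) = Complex.exp (2 * (Real.pi : ℂ) * Complex.I * (n : ℂ) / d) := by
  rw [zet, ZMod.val_natCast, exp_nat_md]

lemma zet_zero : zet d 0 = 1 := by
  simp [zet]

lemma zet_add (s t : ZMod d) : zet d (s + t) = zet d s * zet d t := by
  rw [← ZMod.natCast_zmod_val s, ← ZMod.natCast_zmod_val t, ← Nat.cast_add, zet_natCast,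
    zet_natCast, zet_natCast, ← Complex.exp_add]
  congr 1
  push_cast
  ring

lemma zet_ne_zero (t : ZMod d) : zet d t ≠ 0 := Complex.exp_ne_zero _

lemma zet_inj {s t : ZMod d} (h : zet d s = zet d t) : s = t := by
  rw [zet, zet, Complex.exp_eq_exp_iff_exists_int] at h
  obtain ⟨k, hk⟩ := h
  have hpi : (Real.pi : ℂ) ≠ 0 := Complex.ofReal_ne_zero.mpr Real.pi_ne_zero
  have hd : (d:ℂ) ≠ 0 := dC_ne_zero
  have h2 : (s.val : ℂ) = (t.val : ℂ) + k * d := by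
    have h2' : 2 * (Real.pi : ℂ) * Complex.I * (s.val : ℂ)
        = 2 * (Real.pi : ℂ) * Complex.I * ((t.val : ℂ) + k * d) := by
      have := congrArg (fun z => z * (d:ℂ)) hk
      field_simp at this
      rw [ZMod.natCast_val, ZMod.natCast_val] at this ⊢
      linear_combination (2 * (Real.pi : ℂ) * Complex.I) * this
    exact mul_left_cancel₀ (by simp [Complex.I_ne_zero, hpi]) h2'
  have h3 : (s.val : ℤ) = (t.val : ℤ) + k * d := by exact_mod_cast h2
  have hs := ZMod.val_lt s
  have ht := ZMod.val_lt t
  have hk0 : k = 0 := by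
    rcases lt_trichotomy k 0 with h | h | h
    · nlinarith [Int.le_of_lt_add_one (show (k : ℤ) < 0 + 1 by omega),
        mul_le_mul_of_nonneg_right (show (k:ℤ) ≤ -1 by omega) (show (0:ℤ) ≤ d by positivity)]
    · exact h
    · nlinarith [mul_le_mul_of_nonneg_right (show (1:ℤ) ≤ k by omega) (show (0:ℤ) ≤ d by positivity)]
  rw [hk0] at h3
  simp only [Int.cast_zero, zero_mul, add_zero] at h3
  exact ZMod.val_injective d (by exact_mod_cast h3)

lemma zet_pow (t : ZMod d) (n : ℕ) : zet d t ^ n = zet d ((n : ZMod d) * t) := by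
  induction n with
  | zero => simp [zet_zero]
  | succ n ih =>
    rw [pow_succ, ih, ← zet_add]
    push_cast
    ring_nf

lemma zet_d_pow (t : ZMod d) : zet d t ^ d = 1 := by
  rw [zet_pow, ZMod.natCast_self, zero_mul, zet_zero]

lemma sum_zet (t : ZMod d) : ∑ x : ZMod d, zet d (x * t) = if t = 0 then (d : ℂ) else 0 := by
  split_ifs with h
  · subst h; simp [zet_zero]
  · have h1 : zet d t ≠ 1 := by
      intro hc
      exact h (zet_inj (hc.trans zet_zero.symm))
    have : ∑ x : ZMod d, zet d (x * t) = ∑ r ∈ Finset.range d, zet d t ^ r := by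
      refine Finset.sum_nbij' (fun x => x.val) (fun r => (r : ZMod d)) ?_ ?_ ?_ ?_ ?_
      · intro x _; exact Finset.mem_range.mpr (ZMod.val_lt x)
      · intro r _; exact Finset.mem_univ _
      · intro x _; exact ZMod.natCast_zmod_val x
      · intro r hr; exact ZMod.val_cast_of_lt (Finset.mem_range.mp hr)
      · intro x _
        rw [zet_pow, ZMod.natCast_zmod_val]
    rw [this, geom_sum_eq h1, zet_d_pow, sub_self, zero_div]

lemma sum_zet2 (t : ZMod d × ZMod d) :
    ∑ m : ZMod d × ZMod d, zet d (dt m t) = if t = 0 then ((d : ℂ))^2 else 0 := by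
  have : ∑ m : ZMod d × ZMod d, zet d (dt m t)
      = (∑ x : ZMod d, zet d (x * t.1)) * (∑ y : ZMod d, zet d (y * t.2)) := by
    rw [Finset.sum_mul_sum, Fintype.sum_prod_type]
    exact Finset.sum_congr rfl fun x _ => Finset.sum_congr rfl fun y _ => (zet_add _ _)
  rw [this, sum_zet, sum_zet]
  rcases eq_or_ne t 0 with h | h
  · rw [if_pos h, if_pos (show t.1 = 0 from by rw [h]; rfl),
      if_pos (show t.2 = 0 from by rw [h]; rfl), sq]
  · rw [if_neg h]
    by_cases h1 : t.1 = 0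
    · have h2 : t.2 ≠ 0 := fun h2 => h (Prod.ext h1 h2)
      rw [if_neg h2, mul_zero]
    · rw [if_neg h1, zero_mul]

lemma zet_neg_natCast (n : ℕ) :
    zet d (-(n : ZMod d)) = Complex.exp (-(2 * (Real.pi : ℂ) * Complex.I) * (n : ℂ) / d) := by
  have h1 : zet d (-(n : ZMod d)) * zet d (n : ZMod d) = 1 := by
    rw [← zet_add, neg_add_cancel, zet_zero]
  have h2 : Complex.exp (-(2 * (Real.pi : ℂ) * Complex.I) * (n : ℂ) / d)
      * Complex.exp (2 * (Real.pi : ℂ) * Complex.I * (n : ℂ) / d) = 1 := by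
    rw [← Complex.exp_add]
    rw [show -(2 * (Real.pi : ℂ) * Complex.I) * (n : ℂ) / d
        + 2 * (Real.pi : ℂ) * Complex.I * (n : ℂ) / d = 0 by ring, Complex.exp_zero]
  rw [zet_natCast] at h1
  exact mul_right_cancel₀ (Complex.exp_ne_zero _) (h1.trans h2.symm)

lemma dt_split (m k i : ZMod d × ZMod d) : zet d (dt m i) = zet d (-(dt m (k - i))) * zet d (dt m k) := by
  rw [← zet_add]
  congr 1
  show dt m i = -(dt m (k - i)) + dt m k
  unfold dt
  rw [Prod.fst_sub, Prod.snd_sub]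
  ring

lemma hatKer2_eq (a : ZMod d × ZMod d → ℂ) (m : ZMod d × ZMod d) :
    hatKer2 d a m = ∑ k : ZMod d × ZMod d, a k * zet d (-(dt m k)) := by
  unfold hatKer2
  refine Finset.sum_congr rfl fun k _ => ?_
  congr 1
  have hn : ((m.1.val * k.1.val + m.2.val * k.2.val : ℕ) : ZMod d) = dt m k := by
    push_cast [ZMod.natCast_zmod_val]
    rfl
  rw [← hn, zet_neg_natCast]
  push_cast
  ring_nf

lemma eig (a : ZMod d × ZMod d → ℂ) (m : ZMod d × ZMod d) :
    (convMat2 d a) *ᵥ (chi d m) = hatKer2 d a m • chi d m := by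
  funext k
  simp only [Matrix.mulVec, dotProduct, convMat2, Matrix.of_apply, chi,
    Pi.smul_apply, smul_eq_mul]
  rw [hatKer2_eq, Finset.sum_mul]
  refine Finset.sum_nbij' (fun i => k - i) (fun j => k - j) (fun _ _ => Finset.mem_univ _)
    (fun _ _ => Finset.mem_univ _) (fun i _ => by ring_nf) (fun j _ => by ring_nf) ?_
  intro i _
  show a (k - i) * zet d (dt m i) = a (k - i) * zet d (-(dt m (k - i))) * zet d (dt m k)
  rw [dt_split m k i]
  ring

lemma single_expand (q : ZMod d × ZMod d) :
    ∑ m : ZMod d × ZMod d, zet d (-(dt m q)) • chi d m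
      = ((d : ℂ)^2) • (Pi.single q 1 : ZMod d × ZMod d → ℂ) := by
  funext k
  simp only [Finset.sum_apply, Pi.smul_apply, smul_eq_mul, chi]
  have : ∀ m : ZMod d × ZMod d, zet d (-(dt m q)) * zet d (dt m k) = zet d (dt m (k - q)) := by
    intro m
    rw [← zet_add]
    congr 1
    unfold dt
    rw [Prod.fst_sub, Prod.snd_sub]
    ring
  rw [Finset.sum_congr rfl fun m _ => this m, sum_zet2]
  rw [Pi.single_apply]
  by_cases h : k = q
  · rw [if_pos (by rw [h, sub_self]), if_pos h, mul_one]
  · rw [if_neg (fun hc => h (by rwa [sub_eq_zero] at hc)), if_neg h, mul_zero]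

lemma pow_single (a : ZMod d × ZMod d → ℂ) (q : ZMod d × ZMod d) (n : ℕ) :
    ∑ m : ZMod d × ZMod d, (hatKer2 d a m) ^ n • (zet d (-(dt m q)) • chi d m)
      = ((d : ℂ)^2) • ((convMat2 d a) ^ n *ᵥ (Pi.single q 1 : ZMod d × ZMod d → ℂ)) := by
  induction n with
  | zero =>
    simp only [pow_zero, one_smul, Matrix.one_mulVec]
    exact single_expand q
  | succ n ih =>
    have step : ∑ m : ZMod d × ZMod d, (hatKer2 d a m) ^ (n+1) • (zet d (-(dt m q)) • chi d m)
        = (convMat2 d a).mulVecLin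
            (∑ m : ZMod d × ZMod d, (hatKer2 d a m) ^ n • (zet d (-(dt m q)) • chi d m)) := by
      rw [map_sum]
      refine Finset.sum_congr rfl fun m _ => ?_
      rw [_root_.map_smul, _root_.map_smul, Matrix.mulVecLin_apply, eig]
      rw [smul_smul, smul_smul, smul_smul]
      congr 1
      ring
    rw [step, ih, _root_.map_smul, Matrix.mulVecLin_apply, Matrix.mulVec_mulVec, ← pow_succ']

lemma ext_lemma {M : Type*} [AddCommGroup M] [Module ℂ M] (p : Submodule ℂ M)
    {ι : Type*} [DecidableEq ι] (t : Finset ι) (φ : ι → ℂ) (v : ι → M) (s : Finset ℂ)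
    (hφ : ∀ i ∈ t, φ i ∈ s)
    (h : ∀ k < s.card, (∑ i ∈ t, φ i ^ k • v i) ∈ p) (μ : ℂ) (hμ : μ ∈ s) :
    (∑ i ∈ t.filter (fun i => φ i = μ), v i) ∈ p := by
  classical
  set P : ℂ[X] := Lagrange.basis s id μ with hP
  have hinj : Set.InjOn (id : ℂ → ℂ) s := Function.injective_id.injOn
  have hdeg : P.natDegree < s.card := by
    rw [hP, Lagrange.natDegree_basis hinj hμ]
    have : 0 < s.card := Finset.card_pos.mpr ⟨μ, hμ⟩
    omega
  have key : (∑ k ∈ Finset.range s.card, P.coeff k • (∑ i ∈ t, φ i ^ k • v i)) ∈ p :=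
    Submodule.sum_mem p fun k hk => Submodule.smul_mem p _ (h k (Finset.mem_range.mp hk))
  have hre : (∑ k ∈ Finset.range s.card, P.coeff k • (∑ i ∈ t, φ i ^ k • v i))
      = ∑ i ∈ t, P.eval (φ i) • v i := by
    simp_rw [Finset.smul_sum]
    rw [Finset.sum_comm]
    refine Finset.sum_congr rfl fun i _ => ?_
    rw [Polynomial.eval_eq_sum_range' hdeg]
    rw [Finset.sum_smul]
    refine Finset.sum_congr rfl fun k _ => ?_
    rw [smul_smul]
  rw [hre] at key
  have hsplit : (∑ i ∈ t, P.eval (φ i) • v i)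
      = ∑ i ∈ t.filter (fun i => φ i = μ), v i := by
    rw [← Finset.sum_filter_add_sum_filter_not t (fun i => φ i = μ)]
    have h1 : ∀ i ∈ t.filter (fun i => φ i = μ), P.eval (φ i) • v i = v i := by
      intro i hi
      obtain ⟨hit, hiμ⟩ := Finset.mem_filter.mp hi
      rw [hiμ, hP, show (Lagrange.basis s id μ).eval μ = 1 from Lagrange.eval_basis_self hinj hμ,
        one_smul]
    have h2 : ∀ i ∈ t.filter (fun i => ¬ φ i = μ), P.eval (φ i) • v i = 0 := by
      intro i hi
      obtain ⟨hit, hiμ⟩ := Finset.mem_filter.mp hi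
      rw [hP, show (Lagrange.basis s id μ).eval (φ i) = 0 from
        Lagrange.eval_basis_of_ne (v := id) (fun hc => hiμ hc.symm) (hφ i hit), zero_smul]
    rw [Finset.sum_congr rfl h1, Finset.sum_congr rfl h2, Finset.sum_const_zero, add_zero]
  rwa [hsplit] at key

def fld (x : ZMod d) : ℕ := min x.val (-x).val

lemma fld_le {h : ℕ} (hd : d = 2 * h + 1) (x : ZMod d) : fld x ≤ h := by
  unfold fld
  rcases eq_or_ne x 0 with h0 | h0
  · subst h0; simp
  · have h1 : (-x).val = d - x.val := by rw [ZMod.neg_val, if_neg h0]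
    have h2 : x.val < d := ZMod.val_lt x
    have h3 : x.val ≠ 0 := fun hc => h0 (by rwa [← ZMod.val_eq_zero])
    omega

lemma fld_cast_or (x : ZMod d) :
    ((fld x : ℕ) : ZMod d) = x ∨ ((fld x : ℕ) : ZMod d) = -x := by
  unfold fld
  rcases min_cases x.val (-x).val with ⟨hmin, _⟩ | ⟨hmin, _⟩ <;> rw [hmin]
  · exact Or.inl (ZMod.natCast_zmod_val x)
  · exact Or.inr (ZMod.natCast_zmod_val (-x))

lemma card_T (n : ℕ) :
    ((Finset.range n ×ˢ Finset.range n).filter (fun r : ℕ × ℕ => r.1 ≤ r.2)).card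
      = n * (n + 1) / 2 := by
  have hbij : ((Finset.range n ×ˢ Finset.range n).filter (fun r : ℕ × ℕ => r.1 ≤ r.2)).card
      = ((Finset.range n).sigma (fun b => Finset.range (b + 1))).card := by
    apply Finset.card_nbij' (i := fun r => ⟨r.2, r.1⟩) (j := fun x => (x.2, x.1))
    · intro r hr
      simp only [Finset.mem_coe, Finset.mem_filter, Finset.mem_product, Finset.mem_range] at hr
      simp only [Finset.mem_coe, Finset.mem_sigma, Finset.mem_range]
      omega
    · intro x hx
      simp only [Finset.mem_coe, Finset.mem_sigma, Finset.mem_range] at hx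
      simp only [Finset.mem_coe, Finset.mem_filter, Finset.mem_product, Finset.mem_range]
      omega
    · intro r _; rfl
    · intro x _; rfl
  rw [hbij, Finset.card_sigma]
  simp only [Finset.card_range]
  have e1 : ∑ b ∈ Finset.range (n+1), b = (∑ b ∈ Finset.range n, (b+1)) + 0 :=
    Finset.sum_range_succ' (fun b => b) n
  have e2 := Finset.sum_range_id_mul_two (n + 1)
  have e3 : (n+1) * ((n+1) - 1) = n * (n + 1) := by
    simp [Nat.add_sub_cancel, Nat.mul_comm]
  omega

lemma card_levels_le (hodd : Odd d) (a : ZMod d × ZMod d → ℂ)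
    (hsym : ∀ x y : ZMod d × ZMod d, hatKer2 d a x = hatKer2 d a y ↔
      (((y.1 = x.1 ∨ y.1 = -x.1) ∧ (y.2 = x.2 ∨ y.2 = -x.2)) ∨
       ((y.1 = x.2 ∨ y.1 = -x.2) ∧ (y.2 = x.1 ∨ y.2 = -x.1)))) :
    (Finset.image (fun m => hatKer2 d a m) Finset.univ).card ≤ (d + 1) * (d + 3) / 8 := by
  obtain ⟨h, hd⟩ := hodd
  have hd' : d = 2 * h + 1 := by omega
  set T := ((Finset.range (h+1) ×ˢ Finset.range (h+1)).filter (fun r : ℕ × ℕ => r.1 ≤ r.2))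
    with hT
  have hsurj : Set.SurjOn (fun r : ℕ × ℕ => hatKer2 d a ((r.1 : ZMod d), (r.2 : ZMod d)))
      (T : Set (ℕ × ℕ)) ((Finset.image (fun m => hatKer2 d a m) Finset.univ) : Set ℂ) := by
    intro y hy
    simp only [Finset.coe_image, Set.mem_image] at hy
    obtain ⟨m, _, hm⟩ := hy
    set u := fld m.1
    set v := fld m.2
    refine ⟨(min u v, max u v), ?_, ?_⟩
    · simp only [hT, Finset.coe_filter, Set.mem_setOf_eq, Finset.mem_product, Finset.mem_range]
      have h1 := fld_le hd' m.1
      have h2 := fld_le hd' m.2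
      omega
    · have key : hatKer2 d a m
          = hatKer2 d a (((min u v : ℕ) : ZMod d), ((max u v : ℕ) : ZMod d)) := by
        apply (hsym m (((min u v : ℕ) : ZMod d), ((max u v : ℕ) : ZMod d))).mpr
        rcases le_total u v with huv | huv
        · rw [min_eq_left huv, max_eq_right huv]
          exact Or.inl ⟨fld_cast_or m.1, fld_cast_or m.2⟩
        · rw [min_eq_right huv, max_eq_left huv]
          exact Or.inr ⟨fld_cast_or m.2, fld_cast_or m.1⟩
      show hatKer2 d a (((min u v : ℕ) : ZMod d), ((max u v : ℕ) : ZMod d)) = y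
      rw [← key, hm]
  have hcard := Finset.card_le_card_of_surjOn _ hsurj
  have hTcard : T.card = (h + 1) * (h + 2) / 2 := by
    rw [hT, card_T]
  have harith : (d + 1) * (d + 3) / 8 = (h + 1) * (h + 2) / 2 := by
    have h4 : (d + 1) * (d + 3) = 4 * ((h + 1) * (h + 2)) := by subst hd'; ring
    rw [h4, show (8 : ℕ) = 4 * 2 from rfl, Nat.mul_div_mul_left _ _ (by norm_num)]
  omega

lemma unit_of_gcd {x : ZMod d} (h : Nat.gcd x.val d = 1) : IsUnit x := by
  have := (ZMod.isUnit_iff_coprime x.val d).mpr h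
  rwa [ZMod.natCast_zmod_val] at this

lemma two_isUnit (hodd : Odd d) : IsUnit (2 : ZMod d) := by
  have h2 : Nat.Coprime 2 d := by
    have hdvd : Nat.gcd 2 d ∣ 2 := Nat.gcd_dvd_left 2 d
    have hnd : ¬ (2 ∣ d) := by rcases hodd with ⟨k, hk⟩; omega
    rcases (Nat.dvd_prime Nat.prime_two).mp hdvd with h | h
    · exact h
    · exact absurd (h ▸ Nat.gcd_dvd_right 2 d) hnd
  have := (ZMod.isUnit_iff_coprime 2 d).mpr h2
  rwa [Nat.cast_ofNat] at this

section main
variable (a : ZMod d × ZMod d → ℂ)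
  (hsym : ∀ x y : ZMod d × ZMod d, hatKer2 d a x = hatKer2 d a y ↔
      (((y.1 = x.1 ∨ y.1 = -x.1) ∧ (y.2 = x.2 ∨ y.2 = -x.2)) ∨
       ((y.1 = x.2 ∨ y.1 = -x.2) ∧ (y.2 = x.1 ∨ y.2 = -x.1))))

include hsym in
lemma orbit_snd {m m' : ZMod d × ZMod d} (hL : hatKer2 d a m = hatKer2 d a m') :
    m'.2 = m.1 ∨ m'.2 = -m.1 ∨ m'.2 = m.2 ∨ m'.2 = -m.2 := by
  rcases (hsym m m').mp hL with ⟨_, h⟩ | ⟨_, h⟩ <;> tauto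

include hsym in
lemma orbit_fst {m m' : ZMod d × ZMod d} (hL : hatKer2 d a m = hatKer2 d a m')
    (h2 : m'.2 = m.2) : m'.1 = m.1 ∨ m'.1 = -m.1 := by
  rcases (hsym m m').mp hL with ⟨h, _⟩ | ⟨ha, hb⟩
  · exact h
  · rcases ha with ha | ha <;> rcases hb with hb | hb
    · left; rw [ha, ← h2, hb]
    · right; rw [ha, ← h2, hb]
    · right; rw [ha, ← h2, hb]
    · left; rw [ha, ← h2, hb, neg_neg]

include hsym in
theorem mainlem (hodd : Odd d) (i₁ i₂ j₁ j₂ : ZMod d)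
    (hgi : Nat.gcd (i₁ - i₂).val d = 1) (hgj : Nat.gcd j₂.val d = 1) :
    Submodule.span ℂ {v : ZMod d × ZMod d → ℂ | ∃ q : ZMod d × ZMod d,
        ((q.1 = i₁ ∨ q.1 = i₂) ∧
          (q.2 = j₁ ∨ q.2 = j₁ + j₂ ∨ q.2 = j₁ + 2 * j₂ ∨ q.2 = j₁ + 3 * j₂)) ∧
        ∃ n ≤ (d + 1) * (d + 3) / 8 - 1,
        v = (convMat2 d a) ^ n *ᵥ (Pi.single q 1 : ZMod d × ZMod d → ℂ)} = ⊤ := by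
  classical
  set p := Submodule.span ℂ {v : ZMod d × ZMod d → ℂ | ∃ q : ZMod d × ZMod d,
        ((q.1 = i₁ ∨ q.1 = i₂) ∧
          (q.2 = j₁ ∨ q.2 = j₁ + j₂ ∨ q.2 = j₁ + 2 * j₂ ∨ q.2 = j₁ + 3 * j₂)) ∧
        ∃ n ≤ (d + 1) * (d + 3) / 8 - 1,
        v = (convMat2 d a) ^ n *ᵥ (Pi.single q 1 : ZMod d × ZMod d → ℂ)} with hp
  have hd2 : ((d : ℂ))^2 ≠ 0 := pow_ne_zero _ dC_ne_zero
  have hdpos : 1 ≤ d := Nat.one_le_iff_ne_zero.mpr (NeZero.ne d)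
  have hN1 : 1 ≤ (d + 1) * (d + 3) / 8 := by
    have h8 : 8 ≤ (d + 1) * (d + 3) := by nlinarith
    calc 1 = 8 / 8 := rfl
    _ ≤ (d + 1) * (d + 3) / 8 := Nat.div_le_div_right h8
  have hmem : ∀ q : ZMod d × ZMod d, (q.1 = i₁ ∨ q.1 = i₂) →
      (q.2 = j₁ ∨ q.2 = j₁ + j₂ ∨ q.2 = j₁ + 2 * j₂ ∨ q.2 = j₁ + 3 * j₂) →
      ∀ n < (d + 1) * (d + 3) / 8,
      (convMat2 d a) ^ n *ᵥ (Pi.single q 1 : ZMod d × ZMod d → ℂ) ∈ p := by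
    intro q h1 h2 n hn
    exact Submodule.subset_span ⟨q, ⟨h1, h2⟩, n, by omega, rfl⟩
  have hs₀card : (Finset.image (fun m => hatKer2 d a m) Finset.univ).card
      ≤ (d + 1) * (d + 3) / 8 := card_levels_le hodd a hsym
  have hu2 : IsUnit (2 : ZMod d) := two_isUnit hodd
  have hui : IsUnit (i₁ - i₂) := unit_of_gcd hgi
  have huj : IsUnit j₂ := unit_of_gcd hgj
  -- Stage A
  have stageA : ∀ q : ZMod d × ZMod d, (q.1 = i₁ ∨ q.1 = i₂) →
      (q.2 = j₁ ∨ q.2 = j₁ + j₂ ∨ q.2 = j₁ + 2 * j₂ ∨ q.2 = j₁ + 3 * j₂) →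
      ∀ μ, (∑ m ∈ Finset.univ.filter (fun m => hatKer2 d a m = μ),
        zet d (-(dt m q)) • chi d m) ∈ p := by
    intro q h1 h2 μ
    by_cases hμ : μ ∈ Finset.image (fun m => hatKer2 d a m) Finset.univ
    · apply ext_lemma p Finset.univ (fun m => hatKer2 d a m)
        (fun m => zet d (-(dt m q)) • chi d m)
        (Finset.image (fun m => hatKer2 d a m) Finset.univ)
        (fun m _ => Finset.mem_image_of_mem _ (Finset.mem_univ m)) ?_ μ hμ
      intro k hk
      rw [pow_single a q k]
      exact Submodule.smul_mem p _ (hmem q h1 h2 k (lt_of_lt_of_le hk hs₀card))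
    · have : Finset.univ.filter (fun m => hatKer2 d a m = μ) = ∅ := by
        apply Finset.filter_eq_empty_iff.mpr
        intro m _ hc
        exact hμ (hc ▸ Finset.mem_image_of_mem _ (Finset.mem_univ m))
      rw [this, Finset.sum_empty]
      exact Submodule.zero_mem p
  -- key: every character is in p
  have key : ∀ m : ZMod d × ZMod d, chi d m ∈ p := by
    intro m
    set t₁ := Finset.univ.filter (fun m' => hatKer2 d a m' = hatKer2 d a m) with ht₁
    have hmt₁ : m ∈ t₁ := by simp [ht₁]
    have stageB : ∀ i : ZMod d, (i = i₁ ∨ i = i₂) →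
        (∑ m' ∈ t₁.filter (fun m' => zet d (-(m'.2 * j₂)) = zet d (-(m.2 * j₂))),
          zet d (-(dt m' (i, j₁))) • chi d m') ∈ p := by
      intro i hi
      set s₂ := Finset.image (fun x : ZMod d => zet d (-(x * j₂)))
        ({m.1, -m.1, m.2, -m.2} : Finset (ZMod d)) with hs₂
      have hs₂card : s₂.card ≤ 4 := by
        refine le_trans Finset.card_image_le ?_
        refine le_trans (Finset.card_insert_le _ _) ?_
        refine Nat.succ_le_succ ?_
        refine le_trans (Finset.card_insert_le _ _) ?_
        refine Nat.succ_le_succ ?_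
        refine le_trans (Finset.card_insert_le _ _) ?_
        exact Nat.succ_le_succ (le_of_eq (Finset.card_singleton _))
      apply ext_lemma p t₁ (fun m' => zet d (-(m'.2 * j₂)))
        (fun m' => zet d (-(dt m' (i, j₁))) • chi d m') s₂ ?_ ?_
        (zet d (-(m.2 * j₂))) ?_
      · -- hφ
        intro m' hm'
        have hL : hatKer2 d a m = hatKer2 d a m' := ((Finset.mem_filter.mp hm').2).symm
        have horb := orbit_snd a hsym hL
        apply Finset.mem_image_of_mem
        simp only [Finset.mem_insert, Finset.mem_singleton]
        tauto
      · -- powers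
        intro k hk
        have hk4 : k < 4 := lt_of_lt_of_le hk hs₂card
        have heq : (∑ m' ∈ t₁, (zet d (-(m'.2 * j₂))) ^ k
              • (zet d (-(dt m' (i, j₁))) • chi d m'))
            = ∑ m' ∈ t₁, zet d (-(dt m' (i, j₁ + (k : ZMod d) * j₂))) • chi d m' := by
          refine Finset.sum_congr rfl fun m' _ => ?_
          rw [smul_smul, zet_pow, ← zet_add]
          congr 2
          show (k : ZMod d) * -(m'.2 * j₂) + -(m'.1 * i + m'.2 * j₁)
            = -(m'.1 * i + m'.2 * (j₁ + (k : ZMod d) * j₂))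
          ring
        rw [heq]
        refine stageA (i, j₁ + (k : ZMod d) * j₂) (by simpa using hi) ?_ _
        show j₁ + (k : ZMod d) * j₂ = j₁ ∨ j₁ + (k : ZMod d) * j₂ = j₁ + j₂
          ∨ j₁ + (k : ZMod d) * j₂ = j₁ + 2 * j₂ ∨ j₁ + (k : ZMod d) * j₂ = j₁ + 3 * j₂
        interval_cases k
        · left; norm_num
        · right; left; norm_num
        · right; right; left; norm_num
        · right; right; right; norm_num
      · -- μ ∈ s₂
        apply Finset.mem_image_of_mem
        simp
    -- Stage C
    set t₂ := t₁.filter (fun m' => zet d (-(m'.2 * j₂)) = zet d (-(m.2 * j₂))) with ht₂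
    have hmt₂ : m ∈ t₂ := Finset.mem_filter.mpr ⟨hmt₁, rfl⟩
    have hsnd : ∀ m' ∈ t₂, m'.2 = m.2 := by
      intro m' hm'
      have hz := (Finset.mem_filter.mp hm').2
      have h1 : -(m'.2 * j₂) = -(m.2 * j₂) := zet_inj hz
      have h2 : j₂ * m'.2 = j₂ * m.2 := by
        rw [mul_comm j₂ m'.2, mul_comm j₂ m.2]
        exact neg_inj.mp h1
      exact huj.mul_left_cancel h2
    have hfst : ∀ m' ∈ t₂, m'.1 = m.1 ∨ m'.1 = -m.1 := by
      intro m' hm'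
      have hL : hatKer2 d a m = hatKer2 d a m' :=
        ((Finset.mem_filter.mp (Finset.mem_filter.mp hm').1).2).symm
      exact orbit_fst a hsym hL (hsnd m' hm')
    have hsub : t₂ ⊆ {m, (-m.1, m.2)} := by
      intro m' hm'
      simp only [Finset.mem_insert, Finset.mem_singleton]
      rcases hfst m' hm' with h | h
      · exact Or.inl (Prod.ext h (hsnd m' hm'))
      · exact Or.inr (Prod.ext h (hsnd m' hm'))
    have hchi_of_singleton : t₂ = {m} → chi d m ∈ p := by
      intro ht₂eq
      have hX := stageB i₁ (Or.inl rfl)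
      rw [ht₂eq, Finset.sum_singleton] at hX
      have := Submodule.smul_mem p (zet d (-(dt m (i₁, j₁))))⁻¹ hX
      rwa [smul_smul, inv_mul_cancel₀ (zet_ne_zero _), one_smul] at this
    by_cases hdeg : (-m.1 : ZMod d) = m.1
    · apply hchi_of_singleton
      apply Finset.Subset.antisymm
      · intro m' hm'
        rcases Finset.mem_insert.mp (hsub hm') with h | h
        · simpa using h
        · simp only [Finset.mem_singleton] at h ⊢
          rw [h]
          exact Prod.ext hdeg rfl
      · simp [hmt₂]
    · set mm : ZMod d × ZMod d := (-m.1, m.2) with hmm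
      have hne : m ≠ mm := by
        intro hc
        exact hdeg (congrArg Prod.fst hc).symm
      by_cases hmmt : mm ∈ t₂
      · have ht₂eq : t₂ = {m, mm} := by
          apply Finset.Subset.antisymm hsub
          intro x hx
          rcases Finset.mem_insert.mp hx with h | h
          · rwa [h]
          · rw [Finset.mem_singleton.mp h]; exact hmmt
        have hX := stageB i₁ (Or.inl rfl)
        have hY := stageB i₂ (Or.inr rfl)
        rw [ht₂eq, Finset.sum_pair hne] at hX hY
        set α₁ := zet d (-(dt m (i₁, j₁))) with hα₁
        set α₂ := zet d (-(dt m (i₂, j₁))) with hα₂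
        set β₁ := zet d (-(dt mm (i₁, j₁))) with hβ₁
        set β₂ := zet d (-(dt mm (i₂, j₁))) with hβ₂
        have comb : (β₂ * α₁ - β₁ * α₂) • chi d m ∈ p := by
          have h1 := Submodule.smul_mem p β₂ hX
          have h2 := Submodule.smul_mem p β₁ hY
          have h3 := Submodule.sub_mem p h1 h2
          have he : β₂ • (α₁ • chi d m + β₁ • chi d mm) - β₁ • (α₂ • chi d m + β₂ • chi d mm)
              = (β₂ * α₁ - β₁ * α₂) • chi d m := by
            module
          rwa [he] at h3
        have hdet : β₂ * α₁ - β₁ * α₂ ≠ 0 := by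
          intro hc
          have he : β₂ * α₁ = β₁ * α₂ := sub_eq_zero.mp hc
          have e1 : β₂ * α₁ = zet d (-(dt mm (i₂, j₁)) + -(dt m (i₁, j₁))) := (zet_add _ _).symm
          have e2 : β₁ * α₂ = zet d (-(dt mm (i₁, j₁)) + -(dt m (i₂, j₁))) := (zet_add _ _).symm
          rw [e1, e2] at he
          have hz := zet_inj he
          have hm1 : (2 : ZMod d) * ((i₁ - i₂) * m.1) = 0 := by
            have hdt : -(dt mm (i₂, j₁)) + -(dt m (i₁, j₁))
                = -(dt mm (i₁, j₁)) + -(dt m (i₂, j₁)) := hz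
            show (2 : ZMod d) * ((i₁ - i₂) * m.1) = 0
            unfold dt at hdt
            simp only [hmm] at hdt
            linear_combination -hdt
          have hm2 : (i₁ - i₂) * m.1 = 0 := by
            rcases (hu2.mul_right_eq_zero).mp hm1 with h
            exact h
          have hm3 : m.1 = 0 := (hui.mul_right_eq_zero).mp hm2
          exact hdeg (by rw [hm3, neg_zero])
        have := Submodule.smul_mem p (β₂ * α₁ - β₁ * α₂)⁻¹ comb
        rwa [smul_smul, inv_mul_cancel₀ hdet, one_smul] at this
      · apply hchi_of_singleton
        apply Finset.Subset.antisymm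
        · intro m' hm'
          rcases Finset.mem_insert.mp (hsub hm') with h | h
          · simpa using h
          · exact absurd (Finset.mem_singleton.mp h ▸ hm') hmmt
        · simp [hmt₂]
  -- conclude
  have single_mem : ∀ q : ZMod d × ZMod d, (Pi.single q 1 : ZMod d × ZMod d → ℂ) ∈ p := by
    intro q
    have hsum : (∑ m : ZMod d × ZMod d, zet d (-(dt m q)) • chi d m) ∈ p :=
      Submodule.sum_mem p fun m _ => Submodule.smul_mem p _ (key m)
    rw [single_expand] at hsum
    have := Submodule.smul_mem p (((d : ℂ))^2)⁻¹ hsum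
    rwa [smul_smul, inv_mul_cancel₀ hd2, one_smul] at this
  rw [eq_top_iff]
  intro f _
  have hf : f = ∑ q : ZMod d × ZMod d, f q • (Pi.single q 1 : ZMod d × ZMod d → ℂ) := by
    have e : ∀ q : ZMod d × ZMod d,
        f q • (Pi.single q 1 : ZMod d × ZMod d → ℂ) = Pi.single q (f q) := fun q => by
      rw [← Pi.single_smul, smul_eq_mul, mul_one]
    rw [Finset.sum_congr rfl fun q _ => e q]
    exact (Finset.univ_sum_single f).symm
  rw [hf]
  exact Submodule.sum_mem p fun q _ => Submodule.smul_mem p _ (single_mem q)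

end main

end helpers

section swaphelp
variable {d : ℕ} [NeZero d]

lemma hatKer2_swap (a : ZMod d × ZMod d → ℂ) (x : ZMod d × ZMod d) :
    hatKer2 d (fun m => a m.swap) x = hatKer2 d a x.swap := by
  unfold hatKer2
  refine Fintype.sum_equiv (Equiv.prodComm (ZMod d) (ZMod d)) _ _ fun k => ?_
  simp only [Equiv.prodComm_apply, Prod.fst_swap, Prod.snd_swap, Prod.swap_swap]
  congr 1
  ring

lemma convMat2_swap (a : ZMod d × ZMod d → ℂ) :
    convMat2 d (fun m => a m.swap)
      = (convMat2 d a).submatrix (Equiv.prodComm (ZMod d) (ZMod d))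
          (Equiv.prodComm (ZMod d) (ZMod d)) := by
  ext k i
  rfl

lemma subpow (M : Matrix (ZMod d × ZMod d) (ZMod d × ZMod d) ℂ)
    (e : (ZMod d × ZMod d) ≃ (ZMod d × ZMod d)) (n : ℕ) :
    (M.submatrix e e) ^ n = (M ^ n).submatrix e e := by
  induction n with
  | zero => simp [Matrix.submatrix_one_equiv]
  | succ n ih => rw [pow_succ, ih, Matrix.submatrix_mul_equiv, ← pow_succ]

lemma single_swap_comp (q : ZMod d × ZMod d) :
    ((Pi.single q 1 : ZMod d × ZMod d → ℂ) ∘ (Equiv.prodComm (ZMod d) (ZMod d)).symm)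
      = (Pi.single q.swap 1 : ZMod d × ZMod d → ℂ) := by
  funext k
  simp only [Function.comp_apply, Equiv.prodComm_symm, Equiv.prodComm_apply]
  rw [Pi.single_apply, Pi.single_apply]
  congr 1
  simp [Prod.ext_iff, eq_comm, and_comm]

lemma conv_swap_pow (a : ZMod d × ZMod d → ℂ) (n : ℕ) (q : ZMod d × ZMod d) :
    (convMat2 d (fun m => a m.swap)) ^ n *ᵥ (Pi.single q 1 : ZMod d × ZMod d → ℂ)
      = (fun k : ZMod d × ZMod d =>
          (((convMat2 d a) ^ n *ᵥ (Pi.single q.swap 1 : ZMod d × ZMod d → ℂ)) k.swap)) := by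
  rw [convMat2_swap, subpow, Matrix.submatrix_mulVec_equiv]
  rw [show ((Pi.single q 1 : ZMod d × ZMod d → ℂ)
      ∘ (Equiv.prodComm (ZMod d) (ZMod d)).symm) = (Pi.single q.swap 1 : ZMod d × ZMod d → ℂ)
    from single_swap_comp q]
  rfl

end swaphelp

/-- assume `d` odd and the kernel `a` possesses octagonal symmetry in
frequency response, i.e. the level sets of `â` are exactly the orbits
`{(s,p),(p,s),(-p,s),(-s,p),(-s,-p),(-p,-s),(p,-s),(s,-p)}`. Then, with
`l_{(i,j)} = (d+1)(d+3)/8 - 1`: (first part) if `gcd(|i₁-i₂|,d) = 1` and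
`gcd(j₂,d) = 1`, then for `Ω = {i₁,i₂} × {j₁, j₁+j₂, j₁+2j₂, j₁+3j₂}` the family
`Y = {A^n e_{(i,j)} : (i,j) ∈ Ω, n ≤ (d+1)(d+3)/8 - 1}` is a frame; (second part) if
`gcd(|j₁-j₂|,d) = 1` and `gcd(i₂,d) = 1`, then the same holds for
`Ω = {i₁, i₁+i₂, i₁+2i₂, i₁+3i₂} × {j₁,j₂}`. -/
theorem stmt19 (d : ℕ) [NeZero d] (hodd : Odd d) (a : ZMod d × ZMod d → ℂ)
    (hsym : ∀ x y : ZMod d × ZMod d, hatKer2 d a x = hatKer2 d a y ↔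
      (((y.1 = x.1 ∨ y.1 = -x.1) ∧ (y.2 = x.2 ∨ y.2 = -x.2)) ∨
       ((y.1 = x.2 ∨ y.1 = -x.2) ∧ (y.2 = x.1 ∨ y.2 = -x.1))))
    (i₁ i₂ j₁ j₂ : ZMod d) :
    ((Nat.gcd (i₁ - i₂).val d = 1 → Nat.gcd j₂.val d = 1 →
      Submodule.span ℂ {v : ZMod d × ZMod d → ℂ | ∃ q : ZMod d × ZMod d,
        ((q.1 = i₁ ∨ q.1 = i₂) ∧
          (q.2 = j₁ ∨ q.2 = j₁ + j₂ ∨ q.2 = j₁ + 2 * j₂ ∨ q.2 = j₁ + 3 * j₂)) ∧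
        ∃ n ≤ (d + 1) * (d + 3) / 8 - 1,
        v = (convMat2 d a) ^ n *ᵥ (Pi.single q 1 : ZMod d × ZMod d → ℂ)} = ⊤) ∧
     (Nat.gcd (j₁ - j₂).val d = 1 → Nat.gcd i₂.val d = 1 →
      Submodule.span ℂ {v : ZMod d × ZMod d → ℂ | ∃ q : ZMod d × ZMod d,
        ((q.1 = i₁ ∨ q.1 = i₁ + i₂ ∨ q.1 = i₁ + 2 * i₂ ∨ q.1 = i₁ + 3 * i₂) ∧
          (q.2 = j₁ ∨ q.2 = j₂)) ∧
        ∃ n ≤ (d + 1) * (d + 3) / 8 - 1,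
        v = (convMat2 d a) ^ n *ᵥ (Pi.single q 1 : ZMod d × ZMod d → ℂ)} = ⊤)) := by
  constructor
  · intro h1 h2
    exact mainlem a hsym hodd i₁ i₂ j₁ j₂ h1 h2
  · intro h1 h2
    have hsym' : ∀ x y : ZMod d × ZMod d,
        hatKer2 d (fun m => a m.swap) x = hatKer2 d (fun m => a m.swap) y ↔
        (((y.1 = x.1 ∨ y.1 = -x.1) ∧ (y.2 = x.2 ∨ y.2 = -x.2)) ∨
         ((y.1 = x.2 ∨ y.1 = -x.2) ∧ (y.2 = x.1 ∨ y.2 = -x.1))) := by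
      intro x y
      rw [hatKer2_swap, hatKer2_swap, hsym x.swap y.swap]
      simp only [Prod.fst_swap, Prod.snd_swap]
      tauto
    have H := mainlem (fun m => a m.swap) hsym' hodd j₁ j₂ i₁ i₂ h1 h2
    set Φ := LinearEquiv.funCongrLeft ℂ ℂ (Equiv.prodComm (ZMod d) (ZMod d)) with hΦ
    have himg : {v : ZMod d × ZMod d → ℂ | ∃ q : ZMod d × ZMod d,
        ((q.1 = i₁ ∨ q.1 = i₁ + i₂ ∨ q.1 = i₁ + 2 * i₂ ∨ q.1 = i₁ + 3 * i₂) ∧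
          (q.2 = j₁ ∨ q.2 = j₂)) ∧
        ∃ n ≤ (d + 1) * (d + 3) / 8 - 1,
        v = (convMat2 d a) ^ n *ᵥ (Pi.single q 1 : ZMod d × ZMod d → ℂ)}
        = (Φ : (ZMod d × ZMod d → ℂ) →ₗ[ℂ] (ZMod d × ZMod d → ℂ)) ''
          {v : ZMod d × ZMod d → ℂ | ∃ q : ZMod d × ZMod d,
        ((q.1 = j₁ ∨ q.1 = j₂) ∧
          (q.2 = i₁ ∨ q.2 = i₁ + i₂ ∨ q.2 = i₁ + 2 * i₂ ∨ q.2 = i₁ + 3 * i₂)) ∧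
        ∃ n ≤ (d + 1) * (d + 3) / 8 - 1,
        v = (convMat2 d (fun m => a m.swap)) ^ n *ᵥ (Pi.single q 1 : ZMod d × ZMod d → ℂ)} := by
      ext v
      constructor
      · rintro ⟨q, ⟨hq1, hq2⟩, n, hn, hv⟩
        refine ⟨(convMat2 d (fun m => a m.swap)) ^ n *ᵥ (Pi.single q.swap 1 : _),
          ⟨q.swap, ⟨by simpa using hq2, by simpa using hq1⟩, n, hn, rfl⟩, ?_⟩
        rw [conv_swap_pow a n q.swap]
        funext k
        simp only [hΦ, LinearEquiv.coe_coe, LinearEquiv.funCongrLeft_apply,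
          LinearMap.funLeft_apply, Equiv.prodComm_apply, Prod.swap_swap]
        rw [hv]
      · rintro ⟨w, ⟨q, ⟨hq1, hq2⟩, n, hn, hw⟩, hv⟩
        refine ⟨q.swap, ⟨by simpa using hq2, by simpa using hq1⟩, n, hn, ?_⟩
        rw [← hv, hw, conv_swap_pow a n q]
        funext k
        simp only [hΦ, LinearEquiv.coe_coe, LinearEquiv.funCongrLeft_apply,
          LinearMap.funLeft_apply, Equiv.prodComm_apply, Prod.swap_swap]
    rw [himg, Submodule.span_image, H, Submodule.map_top, LinearEquiv.range]
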